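/- For ε = 0, the Kantorovich problem satisfies W⁰_C(a,b) = max{⟨f,a⟩ + ⟨g,b⟩ : f ∈ ℝ^n, g ∈ ℝ^m, f_i + g_j ≤ C_{ij} for all i,j} (linear programming duality for optimal transport). -/

import Mathlib

open Finset Real

def couplings {n m : ℕ} (a : Fin n → ℝ) (b : Fin m → ℝ) :
    Set (Matrix (Fin n) (Fin m) ℝ) :=
  {P | (∀ i j, 0 ≤ P i j) ∧ (∀ i, ∑ j, P i j = a i) ∧ (∀ j, ∑ i, P i j = b j)}

noncomputable def dotp {n m : ℕ} (P C : Matrix (Fin n) (Fin m) ℝ) : ℝ :=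
  ∑ i, ∑ j, P i j * C i j

/-- The Kantorovich optimal value `W⁰_C(a,b)`. -/
noncomputable def W0 {n m : ℕ} (C : Matrix (Fin n) (Fin m) ℝ)
    (a : Fin n → ℝ) (b : Fin m → ℝ) : ℝ :=
  sInf {v | ∃ P ∈ couplings a b, v = dotp P C}

lemma cone_caratheodory {ι : Type*} [Fintype ι] {E : Type*} [AddCommGroup E] [Module ℝ E]
    (v : ι → E) :
    ∀ (N : ℕ) (x : ι → ℝ), (Finset.univ.filter fun i => x i ≠ 0).card ≤ N → (∀ i, 0 ≤ x i) →
    ∃ y : ι → ℝ, (∀ i, 0 ≤ y i) ∧ ∑ i, y i • v i = ∑ i, x i • v i ∧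
      LinearIndependent ℝ (fun i : {i // y i ≠ 0} => v (i : ι)) := by
  classical
  intro N
  induction N with
  | zero =>
    intro x hcard hx
    have hsupp : ∀ i, x i = 0 := by
      intro i
      by_contra hi
      have : i ∈ Finset.univ.filter fun i => x i ≠ 0 := by simp [hi]
      have := Finset.card_pos.mpr ⟨i, this⟩
      omega
    refine ⟨x, hx, rfl, ?_⟩
    have : IsEmpty {i // x i ≠ 0} := ⟨fun i => i.2 (hsupp i)⟩
    exact linearIndependent_empty_type
  | succ N ih =>
    intro x hcard hx
    by_cases hli : LinearIndependent ℝ (fun i : {i // x i ≠ 0} => v (i : ι))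
    · exact ⟨x, hx, rfl, hli⟩
    · -- get a dependence relation supported on the support of x with a positive entry
      obtain ⟨g, hg0, i₀, hgi₀⟩ := Fintype.not_linearIndependent_iff.mp hli
      have key : ∃ c : ι → ℝ, (∀ i, x i = 0 → c i = 0) ∧ (∑ i, c i • v i = 0) ∧ ∃ i, 0 < c i := by
        set c : ι → ℝ := fun i => if h : x i ≠ 0 then g ⟨i, h⟩ else 0 with hc
        have hsum : ∑ i, c i • v i = 0 := by
          have h1 : ∑ i, c i • v i = ∑ i ∈ Finset.univ.filter (fun i => x i ≠ 0), c i • v i := by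
            rw [Finset.sum_filter_of_ne]
            intro i _ hne hxi
            apply hne
            simp [hc, hxi]
          rw [h1, Finset.sum_subtype (p := fun i => x i ≠ 0) _ (by simp)]
          rw [← hg0]
          apply Finset.sum_congr rfl
          intro i _
          simp [hc, i.2]
        have hczero : ∀ i, x i = 0 → c i = 0 := by intro i hxi; simp [hc, hxi]
        have hci₀ : c (i₀ : ι) ≠ 0 := by simp only [hc, dif_pos i₀.2]; exact hgi₀
        by_cases hpos : ∃ i, 0 < c i
        · exact ⟨c, hczero, hsum, hpos⟩
        · push_neg at hpos
          refine ⟨-c, fun i hxi => by simp [hczero i hxi], ?_, ?_⟩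
          · have : ∑ i, (-c) i • v i = -∑ i, c i • v i := by
              rw [← Finset.sum_neg_distrib]; exact Finset.sum_congr rfl (by intros; simp)
            rw [this, hsum, neg_zero]
          · exact ⟨i₀, by simpa using lt_of_le_of_ne (hpos _) hci₀⟩
      obtain ⟨c, hcz, hcsum, hcpos⟩ := key
      obtain ⟨j₀, hj₀⟩ := hcpos
      have hs'ne : (Finset.univ.filter fun i => 0 < c i).Nonempty := ⟨j₀, by simp [hj₀]⟩
      obtain ⟨i₁, hi₁mem, hi₁min⟩ :=
        Finset.exists_min_image (Finset.univ.filter fun i => 0 < c i) (fun i => x i / c i) hs'ne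
      have hci₁ : 0 < c i₁ := by simpa using hi₁mem
      set t : ℝ := x i₁ / c i₁ with ht
      have ht0 : 0 ≤ t := div_nonneg (hx i₁) hci₁.le
      set x' : ι → ℝ := fun i => x i - t * c i with hx'
      have hx'nn : ∀ i, 0 ≤ x' i := by
        intro i
        by_cases hci : 0 < c i
        · have := hi₁min i (by simp [hci])
          have : t * c i ≤ x i := by
            rw [ht]
            calc x i₁ / c i₁ * c i ≤ x i / c i * c i := by
                  apply mul_le_mul_of_nonneg_right _ hci.le
                  exact hi₁min i (by simp [hci])
              _ = x i := div_mul_cancel₀ _ (ne_of_gt hci)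
          simpa [hx', sub_nonneg] using this
        · push_neg at hci
          have : t * c i ≤ 0 := mul_nonpos_of_nonneg_of_nonpos ht0 hci
          have := hx i
          simp only [hx']
          linarith
      have hsum' : ∑ i, x' i • v i = ∑ i, x i • v i := by
        simp only [hx', sub_smul, Finset.sum_sub_distrib]
        have : ∑ i, (t * c i) • v i = t • ∑ i, c i • v i := by
          rw [Finset.smul_sum]; exact Finset.sum_congr rfl (by intros; rw [smul_smul])
        rw [this, hcsum, smul_zero, sub_zero]
      have hx'i₁ : x' i₁ = 0 := by
        simp only [hx', ht]
        field_simp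
        ring
      have hxi₁ne : x i₁ ≠ 0 := by
        intro h
        exact absurd (hcz i₁ h) (ne_of_gt hci₁)
      have hsubset : (Finset.univ.filter fun i => x' i ≠ 0) ⊆
          (Finset.univ.filter fun i => x i ≠ 0) := by
        intro i hi
        simp only [Finset.mem_filter, Finset.mem_univ, true_and] at hi ⊢
        intro hxi
        exact hi (by simp [hx', hcz i hxi, hxi])
      have hcard' : (Finset.univ.filter fun i => x' i ≠ 0).card < 
          (Finset.univ.filter fun i => x i ≠ 0).card := by
        apply Finset.card_lt_card
        refine ⟨hsubset, fun hsub => ?_⟩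
        have : i₁ ∈ (Finset.univ.filter fun i => x i ≠ 0) := by simp [hxi₁ne]
        have := hsub this
        simp [hx'i₁] at this
      obtain ⟨y, hy1, hy2, hy3⟩ := ih x' (by omega) hx'nn
      exact ⟨y, hy1, by rw [hy2, hsum'], hy3⟩


lemma isClosed_coneSet {ι : Type*} [Fintype ι] {E : Type*} [NormedAddCommGroup E]
    [NormedSpace ℝ E] [FiniteDimensional ℝ E] (v : ι → E) :
    IsClosed {z : E | ∃ x : ι → ℝ, (∀ i, 0 ≤ x i) ∧ z = ∑ i, x i • v i} := by
  classical
  have hrep : {z : E | ∃ x : ι → ℝ, (∀ i, 0 ≤ x i) ∧ z = ∑ i, x i • v i} =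
      ⋃ s : {s : Finset ι // LinearIndependent ℝ (fun i : {j : ι // j ∈ s} => v (i : ι))},
        (fun y : ({j : ι // j ∈ (s : Finset ι)} → ℝ) => ∑ i, y i • v (i : ι)) ''
          {y | ∀ i, 0 ≤ y i} := by
    ext z
    constructor
    · rintro ⟨x, hx, rfl⟩
      obtain ⟨y, hy1, hy2, hy3⟩ := cone_caratheodory v
        (Finset.univ.filter fun i => x i ≠ 0).card.succ x (Nat.le_succ _) hx
      set s : Finset ι := Finset.univ.filter fun i => y i ≠ 0 with hs
      have hli : LinearIndependent ℝ (fun i : {j : ι // j ∈ s} => v (i : ι)) := by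
        exact hy3.comp
          (fun (i : {j : ι // j ∈ s}) =>
            (⟨i.1, (Finset.mem_filter.mp i.2).2⟩ : {i // y i ≠ 0}))
          (fun i j hij =>
            Subtype.ext (by simpa using congrArg Subtype.val hij))
      refine Set.mem_iUnion.mpr ⟨⟨s, hli⟩, ⟨fun i => y i, fun i => hy1 i, ?_⟩⟩
      simp only
      rw [← hy2]
      rw [← Finset.sum_subtype (p := fun i => i ∈ s) s (fun i => Iff.rfl) (fun i => y i • v i)]
      rw [Finset.sum_filter_of_ne]
      intro i _ hne hyi
      exact hne (by simp [hyi])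
    · intro hz
      obtain ⟨⟨s, hli⟩, ⟨y, hy, rfl⟩⟩ := Set.mem_iUnion.mp hz
      refine ⟨fun i => if h : i ∈ s then y ⟨i, h⟩ else 0, fun i => ?_, ?_⟩
      · by_cases h : i ∈ s <;> simp [h]
        exact hy ⟨i, h⟩
      · simp only
        rw [← Finset.sum_subset s.subset_univ (fun i _ hi => by simp [hi])]
        rw [Finset.sum_subtype (p := fun i => i ∈ s) s (fun i => Iff.rfl)
          (fun i => (if h : i ∈ s then y ⟨i, h⟩ else 0) • v i)]
        apply Finset.sum_congr rfl
        intro i _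
        rw [dif_pos i.2]
  rw [hrep]
  apply isClosed_iUnion_of_finite
  rintro ⟨s, hli⟩
  set L : ({j : ι // j ∈ s} → ℝ) →ₗ[ℝ] E :=
    { toFun := fun y => ∑ i, y i • v (i : ι)
      map_add' := by intros; simp [add_smul, Finset.sum_add_distrib]
      map_smul' := by intros; simp [smul_smul, Finset.smul_sum] } with hL
  have hker : LinearMap.ker L = ⊥ := by
    rw [LinearMap.ker_eq_bot']
    intro y hy
    funext i
    exact Fintype.linearIndependent_iff.mp hli y hy i
  have hclosed : IsClosed {y : {j : ι // j ∈ s} → ℝ | ∀ i, 0 ≤ y i} := by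
    have : {y : {j : ι // j ∈ s} → ℝ | ∀ i, 0 ≤ y i} = ⋂ i, {y | 0 ≤ y i} := by
      ext y; simp [Set.mem_iInter]
    rw [this]
    exact isClosed_iInter fun i => isClosed_le continuous_const (continuous_apply i)
  exact (L.isClosedEmbedding_of_injective hker).isClosedMap _ hclosed

open scoped InnerProductSpace in
lemma farkas {ι : Type*} [Fintype ι] {E : Type*} [NormedAddCommGroup E]
    [InnerProductSpace ℝ E] [FiniteDimensional ℝ E] (v : ι → E) (b : E)
    (h : ∀ y : E, (∀ i, 0 ≤ ⟪v i, y⟫_ℝ) → 0 ≤ ⟪b, y⟫_ℝ) :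
    ∃ x : ι → ℝ, (∀ i, 0 ≤ x i) ∧ ∑ i, x i • v i = b := by
  classical
  set K : ConvexCone ℝ E :=
    { carrier := {z : E | ∃ x : ι → ℝ, (∀ i, 0 ≤ x i) ∧ z = ∑ i, x i • v i}
      smul_mem' := by
        rintro c hc z ⟨x, hx, rfl⟩
        refine ⟨fun i => c * x i, fun i => mul_nonneg hc.le (hx i), ?_⟩
        rw [Finset.smul_sum]
        exact Finset.sum_congr rfl (by intros; rw [smul_smul])
      add_mem' := by
        rintro z ⟨x, hx, rfl⟩ z' ⟨x', hx', rfl⟩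
        refine ⟨fun i => x i + x' i, fun i => add_nonneg (hx i) (hx' i), ?_⟩
        rw [← Finset.sum_add_distrib]
        exact Finset.sum_congr rfl (by intros; rw [add_smul]) } with hK
  have hne : ((K : Set E)).Nonempty := ⟨0, ⟨fun _ => 0, fun _ => le_refl _, by simp⟩⟩
  have hcl : IsClosed (K : Set E) := isClosed_coneSet v
  by_contra hcon
  have hbK : b ∉ K := by
    intro hb
    obtain ⟨x, hx, hxb⟩ := hb
    exact hcon ⟨x, hx, hxb.symm⟩
  obtain ⟨y, hy1, hy2⟩ := ProperCone.hyperplane_separation' (⟨K.toPointedCone ⟨fun _ => 0, fun _ => le_refl _, by simp⟩, hcl⟩ : ProperCone ℝ E) hbK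
  have hvy : ∀ i, 0 ≤ ⟪v i, y⟫_ℝ := by
    intro i
    apply hy1
    refine ⟨fun j => if j = i then 1 else 0, fun j => by positivity, ?_⟩
    simp [ite_smul]
  have := h y hvy
  rw [real_inner_comm] at this
  linarith [real_inner_comm b y]

open scoped InnerProductSpace in
lemma gale {ι κ : Type*} [Fintype ι] [Fintype κ] (w : ι → κ → ℝ) (q : ι → ℝ)
    (h : ∀ x : ι → ℝ, (∀ i, 0 ≤ x i) → (∀ t, ∑ i, x i * w i t = 0) → 0 ≤ ∑ i, x i * q i) :
    ∃ y : κ → ℝ, ∀ i, (∑ t, w i t * y t) ≤ q i := by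
  classical
  set u : (κ ⊕ (κ ⊕ ι)) → EuclideanSpace ℝ ι :=
    Sum.elim (fun t => (WithLp.toLp 2 (fun i => w i t) : EuclideanSpace ℝ ι))
      (Sum.elim (fun t => (WithLp.toLp 2 (fun i => -(w i t)) : EuclideanSpace ℝ ι))
        (fun j => (WithLp.toLp 2 (fun i => if i = j then (1 : ℝ) else 0) : EuclideanSpace ℝ ι))) with hu
  have key := farkas u (WithLp.toLp 2 (fun i => q i) : EuclideanSpace ℝ ι) ?_
  · obtain ⟨x, hx, hxb⟩ := key
    refine ⟨fun t => x (Sum.inl t) - x (Sum.inr (Sum.inl t)), fun i => ?_⟩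
    have hcoord : ∑ g, x g * u g i = q i := by
      have : (∑ g, x g • u g) i = q i := by rw [hxb]
      rw [← this]
      rw [WithLp.ofLp_sum, Finset.sum_apply]
      exact Finset.sum_congr rfl (fun g _ => rfl)
    rw [Fintype.sum_sum_type, Fintype.sum_sum_type] at hcoord
    have hite : ∑ j, x (Sum.inr (Sum.inr j)) * u (Sum.inr (Sum.inr j)) i
        = x (Sum.inr (Sum.inr i)) := by
      simp [hu, mul_ite]
    rw [hite] at hcoord
    simp only [hu, Sum.elim_inl, Sum.elim_inr] at hcoord
    have expand : ∑ t, w i t * (x (Sum.inl t) - x (Sum.inr (Sum.inl t)))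
        = ∑ t, x (Sum.inl t) * w i t + ∑ t, x (Sum.inr (Sum.inl t)) * -(w i t) := by
      rw [← Finset.sum_add_distrib]
      exact Finset.sum_congr rfl (fun t _ => by ring)
    rw [expand]
    have := hx (Sum.inr (Sum.inr i))
    linarith
  · intro z hz
    have hz3 : ∀ j, 0 ≤ z j := by
      intro j
      have := hz (Sum.inr (Sum.inr j))
      rw [PiLp.inner_apply] at this
      simpa [hu, mul_ite] using this
    have hz0 : ∀ t, ∑ i, z i * w i t = 0 := by
      intro t
      have h1 := hz (Sum.inl t)
      have h2 := hz (Sum.inr (Sum.inl t))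
      rw [PiLp.inner_apply] at h1 h2
      simp only [hu, Sum.elim_inl, Sum.elim_inr, RCLike.inner_apply, conj_trivial] at h1 h2
      have e1 : ∑ i, w i t * z i = ∑ i, z i * w i t :=
        Finset.sum_congr rfl (fun i _ => mul_comm _ _)
      have e2 : ∑ i, -(w i t) * z i = -∑ i, z i * w i t := by
        rw [← Finset.sum_neg_distrib]
        exact Finset.sum_congr rfl (fun i _ => by ring)
      simp only [mul_neg, Finset.sum_neg_distrib] at h2
      linarith
    have := h z hz3 hz0
    rw [PiLp.inner_apply]
    simp only [RCLike.inner_apply, conj_trivial]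
    have : ∑ i, q i * z i = ∑ i, z i * q i :=
      Finset.sum_congr rfl (fun i _ => mul_comm _ _)
    exact h z hz3 hz0

-- weak duality
lemma weak_duality {n m : ℕ} {a : Fin n → ℝ} {b : Fin m → ℝ}
    {C : Matrix (Fin n) (Fin m) ℝ} {f : Fin n → ℝ} {g : Fin m → ℝ}
    (hfg : ∀ i j, f i + g j ≤ C i j) {P : Matrix (Fin n) (Fin m) ℝ}
    (hP : P ∈ couplings a b) :
    ∑ i, f i * a i + ∑ j, g j * b j ≤ dotp P C := by
  obtain ⟨hP0, hProw, hPcol⟩ := hP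
  have h1 : ∑ i, f i * a i = ∑ i, ∑ j, P i j * f i := by
    apply Finset.sum_congr rfl
    intro i _
    rw [← hProw i, Finset.mul_sum]
    exact Finset.sum_congr rfl (fun j _ => mul_comm _ _)
  have h2 : ∑ j, g j * b j = ∑ i, ∑ j, P i j * g j := by
    rw [Finset.sum_comm]
    apply Finset.sum_congr rfl
    intro j _
    rw [← hPcol j, Finset.mul_sum]
    exact Finset.sum_congr rfl (fun i _ => mul_comm _ _)
  rw [h1, h2, ← Finset.sum_add_distrib]
  unfold dotp
  apply Finset.sum_le_sum
  intro i _
  rw [← Finset.sum_add_distrib]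
  apply Finset.sum_le_sum
  intro j _
  rw [← mul_add]
  exact mul_le_mul_of_nonneg_left (hfg i j) (hP0 i j)

lemma couplings_nonempty {n m : ℕ} {a : Fin n → ℝ} {b : Fin m → ℝ}
    (ha : (∀ i, 0 ≤ a i) ∧ ∑ i, a i = 1) (hb : (∀ j, 0 ≤ b j) ∧ ∑ j, b j = 1) :
    (Matrix.of fun i j => a i * b j) ∈ couplings a b := by
  refine ⟨fun i j => mul_nonneg (ha.1 i) (hb.1 j), fun i => ?_, fun j => ?_⟩
  · simp only [Matrix.of_apply]
    rw [← Finset.mul_sum, hb.2, mul_one]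
  · simp only [Matrix.of_apply]
    rw [← Finset.sum_mul, ha.2, one_mul]

lemma costset_bddBelow {n m : ℕ} {a : Fin n → ℝ} {b : Fin m → ℝ}
    (ha : (∀ i, 0 ≤ a i) ∧ ∑ i, a i = 1) (C : Matrix (Fin n) (Fin m) ℝ) :
    BddBelow {v | ∃ P ∈ couplings a b, v = dotp P C} := by
  refine ⟨-(∑ i, ∑ j, |C i j|), ?_⟩
  rintro v ⟨P, ⟨hP0, hProw, _⟩, rfl⟩
  have hP1 : ∀ i j, P i j ≤ 1 := by
    intro i j
    calc P i j ≤ ∑ j', P i j' :=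
          Finset.single_le_sum (fun j' _ => hP0 i j') (Finset.mem_univ j)
      _ = a i := hProw i
      _ ≤ ∑ i', a i' := Finset.single_le_sum (fun i' _ => ha.1 i') (Finset.mem_univ i)
      _ = 1 := ha.2
  unfold dotp
  rw [← Finset.sum_neg_distrib]
  apply Finset.sum_le_sum
  intro i _
  rw [← Finset.sum_neg_distrib]
  apply Finset.sum_le_sum
  intro j _
  nlinarith [hP0 i j, hP1 i j, neg_abs_le (C i j), le_abs_self (C i j), abs_nonneg (C i j)]

theorem stmt7 {n m : ℕ} (a : Fin n → ℝ) (b : Fin m → ℝ)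
    (ha : (∀ i, 0 ≤ a i) ∧ ∑ i, a i = 1) (hb : (∀ j, 0 ≤ b j) ∧ ∑ j, b j = 1)
    (C : Matrix (Fin n) (Fin m) ℝ) :
    IsGreatest
      {v | ∃ (f : Fin n → ℝ) (g : Fin m → ℝ),
        (∀ i j, f i + g j ≤ C i j) ∧ v = ∑ i, f i * a i + ∑ j, g j * b j}
      (W0 C a b) := by
  classical
  have hSne : {v | ∃ P ∈ couplings a b, v = dotp P C}.Nonempty :=
    ⟨dotp (Matrix.of fun i j => a i * b j) C, Matrix.of fun i j => a i * b j,
      couplings_nonempty ha hb, rfl⟩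
  have hbdd := costset_bddBelow (a := a) (b := b) ha C
  -- upper bound part
  have hub : ∀ v ∈ {v | ∃ (f : Fin n → ℝ) (g : Fin m → ℝ),
      (∀ i j, f i + g j ≤ C i j) ∧ v = ∑ i, f i * a i + ∑ j, g j * b j},
      v ≤ W0 C a b := by
    rintro v ⟨f, g, hfg, rfl⟩
    apply le_csInf hSne
    rintro w ⟨P, hP, rfl⟩
    exact weak_duality hfg hP
  -- membership: apply gale
  set w : ((Fin n × Fin m) ⊕ Unit) → (Fin n ⊕ Fin m) → ℝ :=
    Sum.elim
      (fun p => Sum.elim (fun i' => if i' = p.1 then 1 else 0)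
        (fun j' => if j' = p.2 then 1 else 0))
      (fun _ => fun t => -(Sum.elim a b t)) with hw
  set q : ((Fin n × Fin m) ⊕ Unit) → ℝ :=
    Sum.elim (fun p => C p.1 p.2) (fun _ => -(W0 C a b)) with hq
  have hgale : ∀ x : ((Fin n × Fin m) ⊕ Unit) → ℝ, (∀ i, 0 ≤ x i) →
      (∀ t, ∑ i, x i * w i t = 0) → 0 ≤ ∑ i, x i * q i := by
    intro x hx hx0
    set P : Matrix (Fin n) (Fin m) ℝ := Matrix.of fun i j => x (Sum.inl (i, j)) with hP
    set lam : ℝ := x (Sum.inr ()) with hlam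
    have hrow : ∀ i, ∑ j, P i j = lam * a i := by
      intro i
      have := hx0 (Sum.inl i)
      rw [Fintype.sum_sum_type] at this
      simp only [hw, Sum.elim_inl, Sum.elim_inr, Fintype.sum_prod_type] at this
      have e1 : ∑ i', ∑ j', x (Sum.inl (i', j')) * (if i = i' then 1 else 0)
          = ∑ j', x (Sum.inl (i, j')) := by
        rw [Finset.sum_comm]
        simp [mul_ite]
      rw [e1] at this
      simp only [Fintype.sum_unique, mul_neg] at this
      simp only [hP, hlam, Matrix.of_apply]
      linarith
    have hcol : ∀ j, ∑ i, P i j = lam * b j := by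
      intro j
      have := hx0 (Sum.inr j)
      rw [Fintype.sum_sum_type] at this
      simp only [hw, Sum.elim_inl, Sum.elim_inr, Fintype.sum_prod_type] at this
      have e1 : ∑ i', ∑ j', x (Sum.inl (i', j')) * (if j = j' then 1 else 0)
          = ∑ i', x (Sum.inl (i', j)) := by
        simp [mul_ite]
      rw [e1] at this
      simp only [Fintype.sum_unique, mul_neg] at this
      simp only [hP, hlam, Matrix.of_apply]
      linarith
    have hgoal : ∑ g, x g * q g = ∑ i, ∑ j, P i j * C i j - lam * W0 C a b := by
      rw [Fintype.sum_sum_type]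
      simp only [hq, Sum.elim_inl, Sum.elim_inr, Fintype.sum_prod_type, Fintype.sum_unique]
      simp only [hP, hlam, Matrix.of_apply]
      ring
    rw [hgoal]
    have hPnn : ∀ i j, 0 ≤ P i j := fun i j => hx (Sum.inl (i, j))
    have hlamnn : 0 ≤ lam := hx (Sum.inr ())
    rcases eq_or_lt_of_le hlamnn with hlam0 | hlampos
    · -- lam = 0 : P = 0
      have hPz : ∀ i j, P i j = 0 := by
        intro i j
        have hsum : ∑ j', P i j' = 0 := by rw [hrow i, ← hlam0]; ring
        have := (Finset.sum_eq_zero_iff_of_nonneg (fun j' _ => hPnn i j')).mp hsum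
        exact this j (Finset.mem_univ j)
      have : ∑ i, ∑ j, P i j * C i j = 0 := by
        apply Finset.sum_eq_zero
        intro i _
        apply Finset.sum_eq_zero
        intro j _
        rw [hPz i j, zero_mul]
      rw [this, ← hlam0]
      ring_nf
      exact le_refl _
    · -- lam > 0 : P / lam is a coupling
      set Q : Matrix (Fin n) (Fin m) ℝ := Matrix.of fun i j => P i j / lam with hQ
      have hQc : Q ∈ couplings a b := by
        refine ⟨fun i j => div_nonneg (hPnn i j) hlamnn, fun i => ?_, fun j => ?_⟩
        · simp only [hQ, Matrix.of_apply]
          rw [← Finset.sum_div, hrow i]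
          field_simp
        · simp only [hQ, Matrix.of_apply]
          rw [← Finset.sum_div, hcol j]
          field_simp
      have hW0le : W0 C a b ≤ dotp Q C :=
        csInf_le hbdd ⟨Q, hQc, rfl⟩
      have hdQ : dotp Q C = (∑ i, ∑ j, P i j * C i j) / lam := by
        unfold dotp
        rw [Finset.sum_div]
        apply Finset.sum_congr rfl
        intro i _
        rw [Finset.sum_div]
        apply Finset.sum_congr rfl
        intro j _
        simp only [hQ, Matrix.of_apply]
        ring
      rw [hdQ, le_div_iff₀ hlampos] at hW0le
      linarith
  obtain ⟨y, hy⟩ := gale w q hgale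
  set f : Fin n → ℝ := fun i => y (Sum.inl i) with hf
  set g : Fin m → ℝ := fun j => y (Sum.inr j) with hg
  have hfg : ∀ i j, f i + g j ≤ C i j := by
    intro i j
    have := hy (Sum.inl (i, j))
    rw [Fintype.sum_sum_type] at this
    simpa [hw, hq, ite_mul, hf, hg] using this
  have hval : W0 C a b ≤ ∑ i, f i * a i + ∑ j, g j * b j := by
    have := hy (Sum.inr ())
    rw [Fintype.sum_sum_type] at this
    simp only [hw, hq, Sum.elim_inl, Sum.elim_inr] at this
    have e1 : ∑ i, -(a i) * y (Sum.inl i) = -∑ i, f i * a i := by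
      rw [← Finset.sum_neg_distrib]
      exact Finset.sum_congr rfl (fun i _ => by ring)
    have e2 : ∑ j, -(b j) * y (Sum.inr j) = -∑ j, g j * b j := by
      rw [← Finset.sum_neg_distrib]
      exact Finset.sum_congr rfl (fun j _ => by ring)
    rw [e1, e2] at this
    linarith
  have hle := hub _ ⟨f, g, hfg, rfl⟩
  exact ⟨⟨f, g, hfg, (le_antisymm hle hval).symm⟩, hub⟩
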